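/- Let r ≥ 2 be an integer and consider the greedy sequence q_0 = 0, L_i = 2^{⌊lg(r−q_i)⌋ − 1}, q_{i+1} = q_i + L_i (defined while q_i < r − 1). If L_{i+1} = L_i (both defined), then either q_{i+2} ≥ r − 1 or L_{i+2} < L_{i+1}; that is, each power of two occurs at most twice among the values L_0, L_1, L_2, …. -/

import Mathlib

/-- The block length used by the greedy sequence at position `q`: `L = 2^(⌊lg (r-q)⌋ - 1)`. -/
def greedyL (r q : ℕ) : ℕ := 2 ^ (Nat.log 2 (r - q) - 1)

/-- The greedy sequence: `q 0 = 0`, and while `q i < r - 1`,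
`q (i+1) = q i + greedyL r (q i)`; afterwards it is constant. -/
def greedyQ (r : ℕ) : ℕ → ℕ
  | 0 => 0
  | i + 1 =>
      if greedyQ r i < r - 1 then greedyQ r i + greedyL r (greedyQ r i) else greedyQ r i

theorem stmt14 (r : ℕ) (hr : 2 ≤ r) (i : ℕ)
    (hi : greedyQ r i < r - 1) (hi1 : greedyQ r (i + 1) < r - 1)
    (heq : greedyL r (greedyQ r (i + 1)) = greedyL r (greedyQ r i)) :
    r - 1 ≤ greedyQ r (i + 2) ∨
      greedyL r (greedyQ r (i + 2)) < greedyL r (greedyQ r (i + 1)) := by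
  set q := greedyQ r i with hq
  set n := r - q with hn
  have hn2 : 2 ≤ n := by omega
  set e := Nat.log 2 n with he
  have hpe : 2 ^ e ≤ n := Nat.pow_log_le_self 2 (by omega)
  have hlt : n < 2 ^ (e + 1) := Nat.lt_pow_succ_log_self (by norm_num) n
  have he1 : 1 ≤ e := (Nat.le_log_iff_pow_le (by norm_num) (by omega)).mpr (by simpa using hn2)
  have hsplit : 2 ^ (e - 1) + 2 ^ (e - 1) = 2 ^ e := by
    have : 2 ^ (e - 1) * 2 = 2 ^ (e - 1 + 1) := (pow_succ 2 (e - 1)).symm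
    rw [show e - 1 + 1 = e by omega] at this
    omega
  have hq1 : greedyQ r (i + 1) = q + 2 ^ (e - 1) := by
    show (if greedyQ r i < r - 1 then greedyQ r i + greedyL r (greedyQ r i) else greedyQ r i)
        = q + 2 ^ (e - 1)
    rw [if_pos hi]
    rfl
  -- From hi1 : q + 2^(e-1) < r - 1
  have hi1' : q + 2 ^ (e - 1) < r - 1 := by rwa [hq1] at hi1
  have hm1 : r - (q + 2 ^ (e - 1)) = n - 2 ^ (e - 1) := by omega
  have hpe1 : 2 ^ (e - 1) ≤ 2 ^ e := Nat.pow_le_pow_right (by norm_num) (by omega)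
  -- heq gives log 2 (n - 2^(e-1)) = e
  have heq' : Nat.log 2 (n - 2 ^ (e - 1)) - 1 = e - 1 := by
    have := heq
    rw [hq1] at this
    unfold greedyL at this
    rw [hm1] at this
    exact Nat.pow_right_injective (le_refl 2) this
  have hm1two : 2 ≤ n - 2 ^ (e - 1) := by omega
  have hlogm1 : 1 ≤ Nat.log 2 (n - 2 ^ (e - 1)) :=
    (Nat.le_log_iff_pow_le (by norm_num) (by omega)).mpr (by simpa using hm1two)
  have hlogm1e : Nat.log 2 (n - 2 ^ (e - 1)) = e := by omega
  have hbig : 2 ^ e ≤ n - 2 ^ (e - 1) := by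
    have := Nat.pow_log_le_self 2 (show n - 2 ^ (e - 1) ≠ 0 by omega)
    rwa [hlogm1e] at this
  -- q (i+2) = q + 2^e
  have hq2 : greedyQ r (i + 2) = q + 2 ^ e := by
    show (if greedyQ r (i + 1) < r - 1 then
        greedyQ r (i + 1) + greedyL r (greedyQ r (i + 1)) else greedyQ r (i + 1)) = q + 2 ^ e
    rw [if_pos hi1, heq, hq1]
    show q + 2 ^ (e - 1) + 2 ^ (e - 1) = q + 2 ^ e
    omega
  by_cases hcase : n ≤ 2 ^ e + 1
  · left
    rw [hq2]
    omega
  · right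
    push_neg at hcase
    have hegt : 2 < 2 ^ e := by
      have h2 : 2 ^ (e + 1) = 2 * 2 ^ e := by ring
      omega
    have he2 : 2 ≤ e := by
      by_contra h
      interval_cases e <;> omega
    have hR : greedyL r (q + 2 ^ (e - 1)) = 2 ^ (e - 1) := by
      unfold greedyL
      rw [hm1, heq']
    rw [hq2, hq1, hR]
    show 2 ^ (Nat.log 2 (r - (q + 2 ^ e)) - 1) < 2 ^ (e - 1)
    have hm2 : r - (q + 2 ^ e) = n - 2 ^ e := by omega
    rw [hm2]
    have hmlt : n - 2 ^ e < 2 ^ e := by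
      have h2 : 2 ^ (e + 1) = 2 * 2 ^ e := by ring
      omega
    have hloglt : Nat.log 2 (n - 2 ^ e) < e := Nat.log_lt_of_lt_pow (by omega) hmlt
    have : Nat.log 2 (n - 2 ^ e) - 1 < e - 1 := by omega
    exact Nat.pow_lt_pow_right (by norm_num) this
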